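/- arXiv:2110.04870 — 2 statements merged into one kernel-verified Lean document; each statement's English description precedes it below -/
import Mathlib

section
/- (Lemma 4 of the paper: realism uncertainty relation.) Let X and Y be two families of Hermitian mutually orthogonal projectors on Fin dA, each summing to the identity, with associated pinchings Φ_X and Φ_Y on (Fin dA × Fin dB). For every density matrix ρ on (Fin dA × Fin dB): S(Φ_X(ρ)) + S(Φ_Y(ρ)) ≥ 2 · S(ρ), with equality if and only if Φ_X(ρ) = ρ and Φ_Y(ρ) = ρ. Equivalently, ℜ_X(ρ) + ℜ_Y(ρ) ≤ 2 · Real.log dA, where ℜ_X(ρ) = Real.log dA − (S(Φ_X(ρ)) − S(ρ)). -/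
open Matrix Kronecker BigOperators
open scoped ComplexOrder

/-- The pinching map on the bipartite system by a family of projectors `X`:
`Φ_X(ρ) = ∑ i, (X i ⊗ₖ 1) * ρ * (X i ⊗ₖ 1)`. -/
noncomputable def pinch {dA dB : ℕ} {ι : Type*} [Fintype ι]
    (X : ι → Matrix (Fin dA) (Fin dA) ℂ)
    (ρ : Matrix (Fin dA × Fin dB) (Fin dA × Fin dB) ℂ) :
    Matrix (Fin dA × Fin dB) (Fin dA × Fin dB) ℂ :=
  ∑ i, ((X i) ⊗ₖ (1 : Matrix (Fin dB) (Fin dB) ℂ)) * ρ *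
    ((X i) ⊗ₖ (1 : Matrix (Fin dB) (Fin dB) ℂ))

/-- The von Neumann entropy of a Hermitian matrix, via its eigenvalues. -/
noncomputable def vnEntropy {n : Type*} [Fintype n] [DecidableEq n]
    {ρ : Matrix n n ℂ} (hρ : ρ.IsHermitian) : ℝ :=
  ∑ k, Real.negMulLog (hρ.eigenvalues k)

lemma vnEntropy_congr {n : Type*} [Fintype n] [DecidableEq n]
    {ρ σ : Matrix n n ℂ} (h : ρ = σ) (hρ : ρ.IsHermitian) (hσ : σ.IsHermitian) :
    vnEntropy hρ = vnEntropy hσ := by subst h; rfl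

lemma kron_conjTranspose {m n : Type*} [Fintype m] [Fintype n]
    (A : Matrix m m ℂ) (B : Matrix n n ℂ) : (A ⊗ₖ B)ᴴ = Aᴴ ⊗ₖ Bᴴ := by
  ext ⟨a, b⟩ ⟨c, d⟩
  simp [Matrix.conjTranspose_apply, Matrix.kroneckerMap_apply, star_mul']

lemma kron_sum {m n ι : Type*} [Fintype m] [Fintype n] [Fintype ι] [DecidableEq n]
    (A : ι → Matrix m m ℂ) :
    ∑ i, A i ⊗ₖ (1 : Matrix n n ℂ) = (∑ i, A i) ⊗ₖ (1 : Matrix n n ℂ) := by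
  ext ⟨a, b⟩ ⟨c, d⟩
  simp [Matrix.sum_apply, Matrix.kroneckerMap_apply, Finset.sum_mul]

/-- The Kronecker-lifted family `fun i => X i ⊗ₖ 1` is again a family of Hermitian
mutually orthogonal projectors summing to the identity. -/
lemma kron_proj_family {dA dB : ℕ} {ι : Type*} [Fintype ι] [DecidableEq ι]
    (X : ι → Matrix (Fin dA) (Fin dA) ℂ)
    (hXproj : ∀ i j, X i * X j = if i = j then X i else 0)
    (hXherm : ∀ i, (X i)ᴴ = X i)
    (hXsum : ∑ i, X i = 1) :
    (∀ i j, (X i ⊗ₖ (1 : Matrix (Fin dB) (Fin dB) ℂ)) * (X j ⊗ₖ 1)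
        = if i = j then X i ⊗ₖ (1 : Matrix (Fin dB) (Fin dB) ℂ) else 0) ∧
    (∀ i, (X i ⊗ₖ (1 : Matrix (Fin dB) (Fin dB) ℂ))ᴴ = X i ⊗ₖ 1) ∧
    (∑ i, X i ⊗ₖ (1 : Matrix (Fin dB) (Fin dB) ℂ)) = 1 := by
  refine ⟨fun i j => ?_, fun i => ?_, ?_⟩
  · rw [← Matrix.mul_kronecker_mul, hXproj i j, one_mul]
    by_cases h : i = j
    · simp [h]
    · simp [h, Matrix.zero_kronecker]
  · rw [kron_conjTranspose, hXherm i, Matrix.conjTranspose_one]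
  · rw [kron_sum, hXsum, Matrix.one_kronecker_one]

lemma pinch_entropy {n : Type*} [Fintype n] [DecidableEq n] {ι : Type*} [Fintype ι]
    [DecidableEq ι]
    (P : ι → Matrix n n ℂ)
    (hproj : ∀ i j, P i * P j = if i = j then P i else 0)
    (hherm : ∀ i, (P i)ᴴ = P i)
    (hsum : ∑ i, P i = 1)
    (ρ : Matrix n n ℂ) (hρ : ρ.PosSemidef)
    (hΦ : (∑ i, P i * ρ * P i).IsHermitian) :
    vnEntropy hρ.isHermitian ≤ vnEntropy hΦ ∧
      (vnEntropy hΦ = vnEntropy hρ.isHermitian → ∑ i, P i * ρ * P i = ρ) := by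
  classical
  have hρH := hρ.isHermitian
  set Φ : Matrix n n ℂ := ∑ i, P i * ρ * P i with hΦdef
  set U : Matrix n n ℂ := ↑hρH.eigenvectorUnitary with hU
  set V : Matrix n n ℂ := ↑hΦ.eigenvectorUnitary with hV
  set lam : n → ℝ := hρH.eigenvalues with hlam
  set mu : n → ℝ := hΦ.eigenvalues with hmu
  have hUU : U * Uᴴ = 1 := by
    rw [← Matrix.star_eq_conjTranspose]
    exact (Matrix.mem_unitaryGroup_iff).mp hρH.eigenvectorUnitary.2
  have hUU' : Uᴴ * U = 1 := by
    rw [← Matrix.star_eq_conjTranspose]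
    exact (Matrix.mem_unitaryGroup_iff').mp hρH.eigenvectorUnitary.2
  have hVV : V * Vᴴ = 1 := by
    rw [← Matrix.star_eq_conjTranspose]
    exact (Matrix.mem_unitaryGroup_iff).mp hΦ.eigenvectorUnitary.2
  have hVV' : Vᴴ * V = 1 := by
    rw [← Matrix.star_eq_conjTranspose]
    exact (Matrix.mem_unitaryGroup_iff').mp hΦ.eigenvectorUnitary.2
  have hρspec : ρ = U * diagonal (fun k => (lam k : ℂ)) * Uᴴ := by
    rw [← Matrix.star_eq_conjTranspose]
    exact hρH.spectral_theorem
  have hΦspec : Φ = V * diagonal (fun k => (mu k : ℂ)) * Vᴴ := by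
    rw [← Matrix.star_eq_conjTranspose]
    exact hΦ.spectral_theorem
  have hΦdiag : Vᴴ * Φ * V = diagonal (fun k => (mu k : ℂ)) := by
    rw [← Matrix.star_eq_conjTranspose]
    rw [Matrix.star_eq_conjTranspose, hΦspec, ← mul_assoc, ← mul_assoc, hVV', one_mul, mul_assoc,
      hVV', mul_one]
  set W : ι → Matrix n n ℂ := fun i => Vᴴ * P i * U with hW
  set D : n → n → ℝ := fun l k => ∑ i, Complex.normSq (W i l k) with hD
  have hDnn : ∀ l k, 0 ≤ D l k := fun l k =>
    Finset.sum_nonneg fun i _ => Complex.normSq_nonneg _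
  have hWH : ∀ i, (W i)ᴴ = Uᴴ * P i * V := by
    intro i
    simp [hW, Matrix.conjTranspose_mul, hherm, mul_assoc]
  have hWWH : ∀ i, W i * (W i)ᴴ = Vᴴ * P i * V := by
    intro i
    rw [hWH, hW]
    calc (Vᴴ * P i * U) * (Uᴴ * P i * V)
        = Vᴴ * P i * (U * Uᴴ) * P i * V := by simp only [mul_assoc]
      _ = Vᴴ * (P i * P i) * V := by rw [hUU, mul_one]; simp only [mul_assoc]
      _ = Vᴴ * P i * V := by rw [hproj i i, if_pos rfl]
  have hWHW : ∀ i, (W i)ᴴ * W i = Uᴴ * P i * U := by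
    intro i
    rw [hWH, hW]
    calc (Uᴴ * P i * V) * (Vᴴ * P i * U)
        = Uᴴ * P i * (V * Vᴴ) * P i * U := by simp only [mul_assoc]
      _ = Uᴴ * (P i * P i) * U := by rw [hVV, mul_one]; simp only [mul_assoc]
      _ = Uᴴ * P i * U := by rw [hproj i i, if_pos rfl]
  have hsumWWH : ∑ i, W i * (W i)ᴴ = 1 := by
    simp only [hWWH]
    calc ∑ i, Vᴴ * P i * V = Vᴴ * (∑ i, P i) * V := by
          rw [Finset.mul_sum, Finset.sum_mul]
      _ = 1 := by rw [hsum, mul_one, hVV']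
  have hsumWHW : ∑ i, (W i)ᴴ * W i = 1 := by
    simp only [hWHW]
    calc ∑ i, Uᴴ * P i * U = Uᴴ * (∑ i, P i) * U := by
          rw [Finset.mul_sum, Finset.sum_mul]
      _ = 1 := by rw [hsum, mul_one, hUU']
  -- row sums of D are 1
  have hrow : ∀ l, ∑ k, D l k = 1 := by
    intro l
    have hc : ((∑ k, D l k : ℝ) : ℂ) = (∑ i, W i * (W i)ᴴ) l l := by
      rw [Matrix.sum_apply]
      simp only [hD]
      push_cast
      rw [Finset.sum_comm]
      congr 1; ext i
      rw [Matrix.mul_apply]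
      congr 1; ext k
      rw [Matrix.conjTranspose_apply, ← Complex.mul_conj]
      rfl
    rw [hsumWWH, Matrix.one_apply_eq] at hc
    exact_mod_cast hc
  -- column sums of D are 1
  have hcol : ∀ k, ∑ l, D l k = 1 := by
    intro k
    have hc : ((∑ l, D l k : ℝ) : ℂ) = (∑ i, (W i)ᴴ * W i) k k := by
      rw [Matrix.sum_apply]
      simp only [hD]
      push_cast
      rw [Finset.sum_comm]
      congr 1; ext i
      rw [Matrix.mul_apply]
      congr 1; ext l
      rw [Matrix.conjTranspose_apply, Complex.normSq_eq_conj_mul_self]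
      rfl
    rw [hsumWHW, Matrix.one_apply_eq] at hc
    exact_mod_cast hc
  -- mu is D-average of lam
  have hmuD : ∀ l, mu l = ∑ k, D l k * lam k := by
    intro l
    have h1 : Vᴴ * Φ * V = ∑ i, W i * diagonal (fun k => (lam k : ℂ)) * (W i)ᴴ := by
      rw [hΦdef, Finset.mul_sum, Finset.sum_mul]
      congr 1; ext i
      rw [hρspec, hWH, hW]
      simp only [mul_assoc]
    have hentry : ∀ i, (W i * diagonal (fun k => (lam k : ℂ)) * (W i)ᴴ) l l
        = ∑ k, ((lam k * Complex.normSq (W i l k) : ℝ) : ℂ) := by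
      intro i
      rw [Matrix.mul_apply]
      congr 1; ext k
      rw [Matrix.mul_diagonal, Matrix.conjTranspose_apply]
      push_cast
      rw [← Complex.mul_conj]
      ring_nf
      rfl
    have hc : ((mu l : ℝ) : ℂ) = ((∑ k, D l k * lam k : ℝ) : ℂ) := by
      have h2 := congrFun (congrFun (hΦdiag.symm.trans h1) l) l
      rw [Matrix.diagonal_apply_eq] at h2
      rw [h2, Matrix.sum_apply]
      simp only [hentry, hD]
      rw [Finset.sum_comm]
      push_cast
      congr 1; ext k
      rw [Finset.sum_mul]
      congr 1; ext i
      ring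
    exact_mod_cast hc
  -- entropy comparison
  have hlamnn : ∀ k, 0 ≤ lam k := hρ.eigenvalues_nonneg
  have hJensen : ∀ l, ∑ k, D l k * Real.negMulLog (lam k) ≤ Real.negMulLog (mu l) := by
    intro l
    rw [hmuD l]
    have := Real.concaveOn_negMulLog.le_map_sum (t := Finset.univ)
      (w := D l) (p := lam) (fun k _ => hDnn l k) (hrow l) (fun k _ => hlamnn k)
    simpa [smul_eq_mul] using this
  have hSrho : vnEntropy hρH = ∑ l, ∑ k, D l k * Real.negMulLog (lam k) := by
    rw [Finset.sum_comm]
    unfold vnEntropy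
    congr 1; ext k
    rw [← Finset.sum_mul, hcol k, one_mul]
  have hSPhi : vnEntropy hΦ = ∑ l, Real.negMulLog (mu l) := rfl
  have hle : vnEntropy hρH ≤ vnEntropy hΦ := by
    rw [hSrho, hSPhi]
    exact Finset.sum_le_sum fun l _ => hJensen l
  refine ⟨hle, ?_⟩
  intro heq
  have hterm : ∀ l, ∑ k, D l k * Real.negMulLog (lam k) = Real.negMulLog (mu l) := by
    have h1 : ∑ l, ∑ k, D l k * Real.negMulLog (lam k) = ∑ l, Real.negMulLog (mu l) := by
      rw [← hSrho, ← hSPhi, heq]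
    intro l
    exact (Finset.sum_eq_sum_iff_of_le fun i _ => hJensen i).mp h1 l (Finset.mem_univ l)
  have hkey : ∀ l k, D l k ≠ 0 → lam k = mu l := by
    intro l k hk
    set t : Finset n := Finset.univ.filter (fun j => D l j ≠ 0) with ht
    have hsub : ∀ (g : n → ℝ), ∑ j ∈ t, D l j * g j = ∑ j, D l j * g j := by
      intro g
      rw [ht]
      exact Finset.sum_filter_of_ne (fun x _ hfx h0 => hfx (by rw [h0, zero_mul]))
    have hw1 : ∑ j ∈ t, D l j = 1 := by
      rw [ht, Finset.sum_filter_of_ne (fun x _ hx => hx), hrow l]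
    have hEq : Real.negMulLog (∑ j ∈ t, D l j • lam j)
        = ∑ j ∈ t, D l j • Real.negMulLog (lam j) := by
      simp only [smul_eq_mul]
      rw [hsub lam, hsub (fun j => Real.negMulLog (lam j)), ← hmuD l, hterm l]
    have hpts := (Real.strictConcaveOn_negMulLog.map_sum_eq_iff (t := t) (w := D l)
      (p := lam)
      (fun j hj => lt_of_le_of_ne (hDnn l j) (Ne.symm ((Finset.mem_filter.mp hj).2)))
      hw1 (fun j _ => hlamnn j)).mp hEq
    have hkt : k ∈ t := Finset.mem_filter.mpr ⟨Finset.mem_univ k, hk⟩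
    have h2 := hpts k hkt
    rw [h2]
    simp only [smul_eq_mul]
    rw [hsub lam, ← hmuD l]
  have hcomm : ∀ i, diagonal (fun k => (lam k : ℂ)) * (W i)ᴴ
      = (W i)ᴴ * diagonal (fun k => (mu k : ℂ)) := by
    intro i
    ext a b
    rw [Matrix.diagonal_mul, Matrix.mul_diagonal, Matrix.conjTranspose_apply]
    by_cases hz : W i b a = 0
    · simp [hz]
    · have h1 : 0 < Complex.normSq (W i b a) := Complex.normSq_pos.mpr hz
      have h2 : D b a ≠ 0 := by
        have h3 := Finset.single_le_sum (f := fun j => Complex.normSq (W j b a))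
          (fun j _ => Complex.normSq_nonneg _) (Finset.mem_univ i)
        exact ne_of_gt (lt_of_lt_of_le h1 (by simpa [hD] using h3))
      rw [hkey b a h2]
      ring
  have hsumWHs : ∑ i, (W i)ᴴ = Uᴴ * V := by
    simp only [hWH]
    calc ∑ i, Uᴴ * P i * V = Uᴴ * (∑ i, P i) * V := by rw [Finset.mul_sum, Finset.sum_mul]
      _ = Uᴴ * V := by rw [hsum, mul_one]
  have hρV : ρ * V = V * diagonal (fun k => (mu k : ℂ)) := by
    calc ρ * V = ρ * ((∑ i, P i) * V) := by rw [hsum, one_mul]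
      _ = ∑ i, ρ * (P i * V) := by rw [Finset.sum_mul, Finset.mul_sum]
      _ = ∑ i, U * (diagonal (fun k => (lam k : ℂ)) * (W i)ᴴ) := by
          congr 1; ext i
          rw [hρspec, hWH]
          simp only [mul_assoc]
      _ = ∑ i, U * ((W i)ᴴ * diagonal (fun k => (mu k : ℂ))) := by simp only [hcomm]
      _ = U * ((∑ i, (W i)ᴴ) * diagonal (fun k => (mu k : ℂ))) := by
          rw [Finset.sum_mul, Finset.mul_sum]
      _ = V * diagonal (fun k => (mu k : ℂ)) := by
          rw [hsumWHs]
          calc U * (Uᴴ * V * diagonal (fun k => (mu k : ℂ)))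
              = (U * Uᴴ) * (V * diagonal (fun k => (mu k : ℂ))) := by simp only [mul_assoc]
            _ = _ := by rw [hUU, one_mul]
  calc Φ = V * diagonal (fun k => (mu k : ℂ)) * Vᴴ := hΦspec
    _ = ρ * V * Vᴴ := by rw [hρV]
    _ = ρ := by rw [mul_assoc, hVV, mul_one]


/-- Lemma 4 of the paper (realism uncertainty relation):
`S(Φ_X(ρ)) + S(Φ_Y(ρ)) ≥ 2 S(ρ)`, with equality iff `Φ_X(ρ) = ρ` and `Φ_Y(ρ) = ρ`;
equivalently `ℜ_X(ρ) + ℜ_Y(ρ) ≤ 2 log dA`. -/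
theorem realism_uncertainty {dA dB : ℕ} {ι κ : Type*} [Fintype ι] [DecidableEq ι]
    [Fintype κ] [DecidableEq κ]
    (X : ι → Matrix (Fin dA) (Fin dA) ℂ)
    (hXproj : ∀ i j, X i * X j = if i = j then X i else 0)
    (hXherm : ∀ i, (X i)ᴴ = X i)
    (hXsum : ∑ i, X i = 1)
    (Y : κ → Matrix (Fin dA) (Fin dA) ℂ)
    (hYproj : ∀ i j, Y i * Y j = if i = j then Y i else 0)
    (hYherm : ∀ i, (Y i)ᴴ = Y i)
    (hYsum : ∑ i, Y i = 1)
    (ρ : Matrix (Fin dA × Fin dB) (Fin dA × Fin dB) ℂ)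
    (hρ : ρ.PosSemidef) (htr : ρ.trace = 1)
    (hΦX : (pinch X ρ).IsHermitian) (hΦY : (pinch Y ρ).IsHermitian) :
    (2 * vnEntropy hρ.isHermitian ≤ vnEntropy hΦX + vnEntropy hΦY ∧
      (vnEntropy hΦX + vnEntropy hΦY = 2 * vnEntropy hρ.isHermitian ↔
        pinch X ρ = ρ ∧ pinch Y ρ = ρ)) ∧
    (Real.log dA - (vnEntropy hΦX - vnEntropy hρ.isHermitian))
      + (Real.log dA - (vnEntropy hΦY - vnEntropy hρ.isHermitian))
      ≤ 2 * Real.log dA := by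
  obtain ⟨hPXproj, hPXherm, hPXsum⟩ := kron_proj_family (dB := dB) X hXproj hXherm hXsum
  obtain ⟨hPYproj, hPYherm, hPYsum⟩ := kron_proj_family (dB := dB) Y hYproj hYherm hYsum
  have eX : (∑ i, (X i ⊗ₖ (1 : Matrix (Fin dB) (Fin dB) ℂ)) * ρ * (X i ⊗ₖ 1)) = pinch X ρ :=
    rfl
  have eY : (∑ i, (Y i ⊗ₖ (1 : Matrix (Fin dB) (Fin dB) ℂ)) * ρ * (Y i ⊗ₖ 1)) = pinch Y ρ :=
    rfl
  have hΦX' : (∑ i, (X i ⊗ₖ (1 : Matrix (Fin dB) (Fin dB) ℂ)) * ρ * (X i ⊗ₖ 1)).IsHermitian :=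
    by rw [eX]; exact hΦX
  have hΦY' : (∑ i, (Y i ⊗ₖ (1 : Matrix (Fin dB) (Fin dB) ℂ)) * ρ * (Y i ⊗ₖ 1)).IsHermitian :=
    by rw [eY]; exact hΦY
  obtain ⟨hleX, himpX⟩ := pinch_entropy _ hPXproj hPXherm hPXsum ρ hρ hΦX'
  obtain ⟨hleY, himpY⟩ := pinch_entropy _ hPYproj hPYherm hPYsum ρ hρ hΦY'
  have hcX : vnEntropy hΦX' = vnEntropy hΦX := vnEntropy_congr eX _ _
  have hcY : vnEntropy hΦY' = vnEntropy hΦY := vnEntropy_congr eY _ _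
  rw [hcX] at hleX himpX
  rw [hcY] at hleY himpY
  refine ⟨⟨by linarith, ?_, ?_⟩, by linarith⟩
  · intro h
    have h1 : vnEntropy hΦX = vnEntropy hρ.isHermitian := by linarith
    have h2 : vnEntropy hΦY = vnEntropy hρ.isHermitian := by linarith
    exact ⟨eX ▸ himpX h1, eY ▸ himpY h2⟩
  · rintro ⟨h1, h2⟩
    have e1 : vnEntropy hΦX = vnEntropy hρ.isHermitian := vnEntropy_congr h1 _ _
    have e2 : vnEntropy hΦY = vnEntropy hρ.isHermitian := vnEntropy_congr h2 _ _
    linarith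
end

section
/- (Successive pinchings in mutually unbiased bases produce the maximally mixed local state.) Let a, b : Fin dA → (Fin dA → ℂ) be two orthonormal bases of ℂ^dA satisfying the unbiasedness condition ‖star (a i) ⬝ᵥ (b j)‖² = 1/dA for all i, j. Let Φ_A and Φ_{A'} be the pinchings on (Fin dA × Fin dB) by the rank-one projectors (vecMulVec (a i) (star (a i))) ⊗ₖ 1 and (vecMulVec (b j) (star (b j))) ⊗ₖ 1, respectively. Then for every matrix ρ on (Fin dA × Fin dB): Φ_{A'}(Φ_A(ρ)) = ((1/dA : ℂ) • 1) ⊗ₖ Tr_A(ρ). -/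
open Matrix Kronecker BigOperators

/-- Partial trace over the first factor. -/
noncomputable def trA {dA dB : ℕ}
    (M : Matrix (Fin dA × Fin dB) (Fin dA × Fin dB) ℂ) :
    Matrix (Fin dB) (Fin dB) ℂ :=
  fun j j' => ∑ i, M (i, j) (i, j')

lemma dual_unitary {d : ℕ} (a : Fin d → Fin d → ℂ)
    (ha : ∀ i j, star (a i) ⬝ᵥ a j = if i = j then 1 else 0) (r r' : Fin d) :
    ∑ i, (starRingEnd ℂ) (a i r) * a i r' = if r = r' then 1 else 0 := by
  have hU : (Matrix.of a) * (Matrix.of a)ᴴ = 1 := by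
    ext i j
    simp only [Matrix.mul_apply, Matrix.conjTranspose_apply, Matrix.of_apply, Matrix.one_apply]
    have : ∑ k, a i k * star (a j k) = (starRingEnd ℂ) (star (a i) ⬝ᵥ a j) := by
      simp [dotProduct, map_sum, RCLike.star_def, mul_comm]
    rw [this, ha i j]
    by_cases h : i = j <;> simp [h, eq_comm]
  have hU' := mul_eq_one_comm.mp hU
  have := congrFun (congrFun hU' r) r'
  simpa [Matrix.mul_apply, Matrix.conjTranspose_apply, Matrix.one_apply, RCLike.star_def] using this

lemma vmv_mul {d : ℕ} (u v w x : Fin d → ℂ) :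
    vecMulVec u (star v) * vecMulVec w (star x)
      = (star v ⬝ᵥ w) • vecMulVec u (star x) := by
  ext p r
  simp only [Matrix.mul_apply, vecMulVec_apply, Pi.star_apply, Matrix.smul_apply,
    dotProduct, smul_eq_mul, Finset.sum_mul]
  refine Finset.sum_congr rfl fun s _ => by ring

lemma entry {dA dB : ℕ} (u v w x : Fin dA → ℂ)
    (ρ : Matrix (Fin dA × Fin dB) (Fin dA × Fin dB) ℂ) (p p' : Fin dA) (q q' : Fin dB) :
    ((vecMulVec u (star w) ⊗ₖ (1 : Matrix (Fin dB) (Fin dB) ℂ)) * ρ *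
        (vecMulVec x (star v) ⊗ₖ 1) : Matrix (Fin dA × Fin dB) (Fin dA × Fin dB) ℂ) (p, q) (p', q')
      = u p * star (v p') * ∑ r, ∑ r', star (w r) * ρ (r, q) (r', q') * x r' := by
  simp only [Matrix.mul_apply, kroneckerMap_apply, vecMulVec_apply, Pi.star_apply,
    Matrix.one_apply, Fintype.sum_prod_type, mul_ite, ite_mul, mul_zero, zero_mul, mul_one,
    one_mul, Finset.sum_ite_eq, Finset.sum_ite_eq', Finset.mem_univ, if_true,
    Finset.mul_sum, Finset.sum_mul]
  rw [Finset.sum_comm]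
  exact Finset.sum_congr rfl fun r _ => Finset.sum_congr rfl fun r' _ => by ring

/-- Successive pinchings in mutually unbiased bases produce the maximally mixed local
state: `Φ_{A'}(Φ_A(ρ)) = (𝟙/dA) ⊗ₖ Tr_A(ρ)`. -/
theorem mub_pinch_pinch {dA dB : ℕ}
    (a b : Fin dA → (Fin dA → ℂ))
    (ha : ∀ i j, star (a i) ⬝ᵥ a j = if i = j then 1 else 0)
    (hb : ∀ i j, star (b i) ⬝ᵥ b j = if i = j then 1 else 0)
    (hab : ∀ i j, ‖star (a i) ⬝ᵥ b j‖ ^ 2 = 1 / dA)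
    (ρ : Matrix (Fin dA × Fin dB) (Fin dA × Fin dB) ℂ) :
    pinch (fun j => vecMulVec (b j) (star (b j)))
        (pinch (fun i => vecMulVec (a i) (star (a i))) ρ)
      = ((1 / (dA : ℂ)) • (1 : Matrix (Fin dA) (Fin dA) ℂ)) ⊗ₖ trA ρ := by
  have key : ∀ (j i : Fin dA),
      ((vecMulVec (b j) (star (b j))) ⊗ₖ (1 : Matrix (Fin dB) (Fin dB) ℂ)) *
        (((vecMulVec (a i) (star (a i))) ⊗ₖ (1 : Matrix (Fin dB) (Fin dB) ℂ)) * ρ *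
          ((vecMulVec (a i) (star (a i))) ⊗ₖ (1 : Matrix (Fin dB) (Fin dB) ℂ))) *
        ((vecMulVec (b j) (star (b j))) ⊗ₖ (1 : Matrix (Fin dB) (Fin dB) ℂ))
      = (1 / (dA : ℂ)) • ((vecMulVec (b j) (star (a i)) ⊗ₖ (1 : Matrix (Fin dB) (Fin dB) ℂ)) * ρ *
          (vecMulVec (a i) (star (b j)) ⊗ₖ (1 : Matrix (Fin dB) (Fin dB) ℂ))) := by
    intro j i
    have h1 : (vecMulVec (b j) (star (b j)) ⊗ₖ (1 : Matrix (Fin dB) (Fin dB) ℂ)) *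
        (vecMulVec (a i) (star (a i)) ⊗ₖ (1 : Matrix (Fin dB) (Fin dB) ℂ))
        = (star (b j) ⬝ᵥ a i) • (vecMulVec (b j) (star (a i)) ⊗ₖ (1 : Matrix (Fin dB) (Fin dB) ℂ)) := by
      rw [← Matrix.mul_kronecker_mul, vmv_mul, Matrix.one_mul, Matrix.smul_kronecker]
    have h2 : (vecMulVec (a i) (star (a i)) ⊗ₖ (1 : Matrix (Fin dB) (Fin dB) ℂ)) *
        (vecMulVec (b j) (star (b j)) ⊗ₖ (1 : Matrix (Fin dB) (Fin dB) ℂ))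
        = (star (a i) ⬝ᵥ b j) • (vecMulVec (a i) (star (b j)) ⊗ₖ (1 : Matrix (Fin dB) (Fin dB) ℂ)) := by
      rw [← Matrix.mul_kronecker_mul, vmv_mul, Matrix.one_mul, Matrix.smul_kronecker]
    have hc : (star (b j) ⬝ᵥ a i) * (star (a i) ⬝ᵥ b j) = 1 / (dA : ℂ) := by
      have hcc : star (b j) ⬝ᵥ a i = (starRingEnd ℂ) (star (a i) ⬝ᵥ b j) := by
        simp [dotProduct, map_sum, RCLike.star_def, mul_comm]
      rw [hcc, mul_comm, Complex.mul_conj]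
      have hns : (Complex.normSq (star (a i) ⬝ᵥ b j) : ℝ) = 1 / (dA : ℝ) := by
        rw [← hab i j, Complex.sq_norm]
      rw [hns]
      push_cast
      ring
    calc _ = ((vecMulVec (b j) (star (b j)) ⊗ₖ (1 : Matrix (Fin dB) (Fin dB) ℂ)) *
            (vecMulVec (a i) (star (a i)) ⊗ₖ (1 : Matrix (Fin dB) (Fin dB) ℂ))) * ρ *
            ((vecMulVec (a i) (star (a i)) ⊗ₖ (1 : Matrix (Fin dB) (Fin dB) ℂ)) *
            (vecMulVec (b j) (star (b j)) ⊗ₖ (1 : Matrix (Fin dB) (Fin dB) ℂ))) := by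
          simp only [mul_assoc]
      _ = _ := by
          rw [h1, h2, smul_mul_assoc, smul_mul_assoc, mul_smul_comm, smul_smul, hc]
  have hstep : pinch (fun j => vecMulVec (b j) (star (b j)))
      (pinch (fun i => vecMulVec (a i) (star (a i))) ρ)
      = ∑ j, ∑ i, (1 / (dA : ℂ)) •
          ((vecMulVec (b j) (star (a i)) ⊗ₖ (1 : Matrix (Fin dB) (Fin dB) ℂ)) * ρ *
            (vecMulVec (a i) (star (b j)) ⊗ₖ (1 : Matrix (Fin dB) (Fin dB) ℂ))) := by
    unfold pinch
    refine Finset.sum_congr rfl fun j _ => ?_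
    rw [Matrix.mul_sum, Matrix.sum_mul]
    exact Finset.sum_congr rfl fun i _ => key j i
  rw [hstep]
  ext ⟨p, q⟩ ⟨p', q'⟩
  simp only [Matrix.sum_apply, Matrix.smul_apply, entry, smul_eq_mul, kroneckerMap_apply,
    Matrix.one_apply, trA]
  have hA : ∑ i : Fin dA, ∑ r, ∑ r', star (a i r) * ρ (r, q) (r', q') * a i r'
      = ∑ r, ρ (r, q) (r, q') := by
    rw [Finset.sum_comm]
    refine Finset.sum_congr rfl fun r _ => ?_
    rw [Finset.sum_comm]
    calc ∑ r', ∑ i, star (a i r) * ρ (r, q) (r', q') * a i r'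
        = ∑ r', ρ (r, q) (r', q') * ∑ i, (starRingEnd ℂ) (a i r) * a i r' := by
          refine Finset.sum_congr rfl fun r' _ => ?_
          rw [Finset.mul_sum]
          exact Finset.sum_congr rfl fun i _ => by simp only [RCLike.star_def]; ring
      _ = ∑ r', ρ (r, q) (r', q') * (if r = r' then 1 else 0) := by
          exact Finset.sum_congr rfl fun r' _ => by rw [dual_unitary a ha]
      _ = ρ (r, q) (r, q') := by simp
  have hB : ∑ j : Fin dA, b j p * star (b j p') = if p = p' then 1 else 0 := by
    calc ∑ j : Fin dA, b j p * star (b j p') = ∑ j, (starRingEnd ℂ) (b j p') * b j p := by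
          exact Finset.sum_congr rfl fun j _ => by simp only [RCLike.star_def]; ring
      _ = if p' = p then 1 else 0 := dual_unitary b hb p' p
      _ = if p = p' then 1 else 0 := by simp [eq_comm]
  calc ∑ j : Fin dA, ∑ i : Fin dA, (1 / (dA : ℂ)) *
        (b j p * star (b j p') * ∑ r, ∑ r', star (a i r) * ρ (r, q) (r', q') * a i r')
      = ∑ j : Fin dA, (1 / (dA : ℂ)) * (b j p * star (b j p')) * ∑ r, ρ (r, q) (r, q') := by
        refine Finset.sum_congr rfl fun j _ => ?_
        rw [← hA, Finset.mul_sum]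
        exact Finset.sum_congr rfl fun i _ => by ring
    _ = (∑ j : Fin dA, (1 / (dA : ℂ)) * (b j p * star (b j p'))) * ∑ r, ρ (r, q) (r, q') := by
        rw [← Finset.sum_mul]
    _ = ((1 / (dA : ℂ)) * ∑ j : Fin dA, b j p * star (b j p')) * ∑ r, ρ (r, q) (r, q') := by
        rw [← Finset.mul_sum]
    _ = (1 / (dA : ℂ)) * (if p = p' then 1 else 0) * ∑ r, ρ (r, q) (r, q') := by rw [hB]
    _ = _ := by split_ifs <;> simp
end
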